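/- Let v₁, …, v_{j−1}, v_{j+1}, …, v_n ∈ ℂ^k be fixed vectors (viewing a real-linear map into ℂ^k by its values on a real basis). The set Ω = {v ∈ ℂ^k : v, v₁, …, v_{j−1}, v_{j+1}, …, v_n span ℂ^k over ℂ} is either empty, all of ℂ^k, or the complement of a complex affine hyperplane (a real-codimension-2 subspace) in ℂ^k. In particular Ω is ample: the convex hull of each path-component of Ω is either empty or all of ℂ^k. -/

import Mathlib

open scoped Pointwise

private lemma stmt10_hyper {k : ℕ} (W₀ : Submodule ℂ (Fin k → ℂ))
    (hrk : Module.finrank ℂ W₀ + 1 = k) :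
    IsPathConnected ((W₀ : Set (Fin k → ℂ))ᶜ) ∧ AmpleSet ((W₀ : Set (Fin k → ℂ))ᶜ) := by
  have hF : Module.finrank ℂ (Fin k → ℂ) = k := Module.finrank_fin_fun ℂ
  have hq1 : Module.finrank ℂ ((Fin k → ℂ) ⧸ W₀) = 1 := by
    have h := Submodule.finrank_quotient_add_finrank W₀
    omega
  have hq2 : Module.finrank ℝ ((Fin k → ℂ) ⧸ W₀.restrictScalars ℝ) = 2 := by
    rw [LinearEquiv.finrank_eq (Submodule.Quotient.restrictScalarsEquiv ℝ W₀),
      ← Module.finrank_mul_finrank ℝ ℂ ((Fin k → ℂ) ⧸ W₀), hq1,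
      Complex.finrank_real_complex, mul_one]
  have hcodim : 1 < Module.rank ℝ ((Fin k → ℂ) ⧸ W₀.restrictScalars ℝ) := by
    rw [← Module.finrank_eq_rank, hq2]
    exact_mod_cast one_lt_two
  exact ⟨isPathConnected_compl_of_one_lt_codim hcodim, AmpleSet.of_one_lt_codim hcodim⟩

private lemma stmt10_master {k : ℕ} (W₀ : Submodule ℂ (Fin k → ℂ)) :
    ({w : Fin k → ℂ | (ℂ ∙ w) ⊔ W₀ = ⊤} = ∅ ∨
     {w : Fin k → ℂ | (ℂ ∙ w) ⊔ W₀ = ⊤} = Set.univ ∨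
     ∃ W : Submodule ℂ (Fin k → ℂ), Module.finrank ℂ W = k - 1 ∧
       {w : Fin k → ℂ | (ℂ ∙ w) ⊔ W₀ = ⊤} = (W : Set (Fin k → ℂ))ᶜ) ∧
    ∀ w ∈ {w : Fin k → ℂ | (ℂ ∙ w) ⊔ W₀ = ⊤},
      convexHull ℝ (pathComponentIn {w : Fin k → ℂ | (ℂ ∙ w) ⊔ W₀ = ⊤} w) = Set.univ := by
  classical
  have hF : Module.finrank ℂ (Fin k → ℂ) = k := Module.finrank_fin_fun ℂ
  by_cases htop : W₀ = ⊤
  · have hΩu : {w : Fin k → ℂ | (ℂ ∙ w) ⊔ W₀ = ⊤} = Set.univ := by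
      ext w
      simp [htop]
    refine ⟨Or.inr (Or.inl hΩu), ?_⟩
    intro w hw
    have hpc : IsPathConnected (Set.univ : Set (Fin k → ℂ)) :=
      (convex_univ : Convex ℝ (Set.univ : Set (Fin k → ℂ))).isPathConnected ⟨0, trivial⟩
    have hp : pathComponentIn {w : Fin k → ℂ | (ℂ ∙ w) ⊔ W₀ = ⊤} w = Set.univ := by
      apply Set.Subset.antisymm (Set.subset_univ _)
      rw [hΩu]
      exact hpc.subset_pathComponentIn trivial (le_refl _)
    rw [hp, convexHull_univ]
  · by_cases hne : {w : Fin k → ℂ | (ℂ ∙ w) ⊔ W₀ = ⊤}.Nonempty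
    · obtain ⟨w₀, hw₀⟩ := hne
      have hw₀' : (ℂ ∙ w₀) ⊔ W₀ = ⊤ := hw₀
      have hlt : Module.finrank ℂ W₀ < k := by
        have h := Submodule.finrank_lt (K := ℂ) (V := Fin k → ℂ)
          (htop : W₀ ≠ ⊤)
        omega
      have hsing : Module.finrank ℂ (ℂ ∙ w₀) ≤ 1 := by
        by_cases h0 : w₀ = 0
        · subst h0
          rw [Submodule.span_zero_singleton]
          simp
        · rw [finrank_span_singleton h0]
      have hge : k ≤ 1 + Module.finrank ℂ W₀ := by
        have h1 : Module.finrank ℂ ((ℂ ∙ w₀) ⊔ W₀ : Submodule ℂ (Fin k → ℂ)) ≤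
            Module.finrank ℂ (ℂ ∙ w₀) + Module.finrank ℂ W₀ :=
          Submodule.finrank_add_le_finrank_add_finrank _ _
        rw [hw₀', finrank_top, hF] at h1
        omega
      have hrk : Module.finrank ℂ W₀ + 1 = k := by omega
      have hΩc : {w : Fin k → ℂ | (ℂ ∙ w) ⊔ W₀ = ⊤} = (W₀ : Set (Fin k → ℂ))ᶜ := by
        ext w
        simp only [Set.mem_setOf_eq, Set.mem_compl_iff, SetLike.mem_coe]
        constructor
        · intro h hw
          have hle : (ℂ ∙ w) ⊔ W₀ ≤ W₀ :=
            sup_le (by rwa [Submodule.span_singleton_le_iff_mem]) le_rfl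
          exact htop (le_antisymm le_top (le_trans (le_of_eq h.symm) hle))
        · intro hw
          have hlt2 : W₀ < (ℂ ∙ w) ⊔ W₀ := by
            refine lt_of_le_of_ne le_sup_right fun h => hw ?_
            rw [h]
            exact Submodule.mem_sup_left (Submodule.mem_span_singleton_self w)
          have h3 : Module.finrank ℂ W₀ <
              Module.finrank ℂ ((ℂ ∙ w) ⊔ W₀ : Submodule ℂ (Fin k → ℂ)) :=
            Submodule.finrank_lt_finrank_of_lt hlt2
          have h4 : Module.finrank ℂ ((ℂ ∙ w) ⊔ W₀ : Submodule ℂ (Fin k → ℂ)) ≤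
              Module.finrank ℂ (Fin k → ℂ) := Submodule.finrank_le _
          exact Submodule.eq_top_of_finrank_eq (by omega)
      obtain ⟨hpc, hamp⟩ := stmt10_hyper W₀ hrk
      refine ⟨Or.inr (Or.inr ⟨W₀, by omega, hΩc⟩), ?_⟩
      intro w hw
      have hw' : w ∈ (W₀ : Set (Fin k → ℂ))ᶜ := hΩc ▸ hw
      have hpce : pathComponentIn {w : Fin k → ℂ | (ℂ ∙ w) ⊔ W₀ = ⊤} w =
          (W₀ : Set (Fin k → ℂ))ᶜ := by
        rw [hΩc]
        refine Set.Subset.antisymm pathComponentIn_subset ?_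
        exact hpc.subset_pathComponentIn hw' (le_refl _)
      rw [hpce]
      have hch := hamp w hw'
      refine Set.eq_univ_of_univ_subset ?_
      rw [← hch]
      exact convexHull_mono (connectedComponentIn_subset _ _)
    · refine ⟨Or.inl (Set.not_nonempty_iff_eq_empty.mp hne), ?_⟩
      intro w hw
      exact absurd ⟨w, hw⟩ hne

/-- STATEMENT 10: given fixed vectors `v₁,…,v̂ⱼ,…,vₙ ∈ ℂᵏ`, the set
`Ω = {v : v together with the fixed vectors spans ℂᵏ over ℂ}` is either empty,
all of `ℂᵏ`, or the complement of a complex hyperplane (a real-codimension-2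
subspace).  In particular `Ω` is ample: the convex hull of each path-component
of `Ω` is either empty or all of `ℂᵏ`. -/
theorem stmt10 {k m : ℕ} (v : Fin m → (Fin k → ℂ)) :
    ({w : Fin k → ℂ | Submodule.span ℂ (insert w (Set.range v)) = ⊤} = ∅ ∨
     {w : Fin k → ℂ | Submodule.span ℂ (insert w (Set.range v)) = ⊤} = Set.univ ∨
     ∃ W : Submodule ℂ (Fin k → ℂ), Module.finrank ℂ W = k - 1 ∧
       {w : Fin k → ℂ | Submodule.span ℂ (insert w (Set.range v)) = ⊤}
         = (W : Set (Fin k → ℂ))ᶜ) ∧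
    ∀ w ∈ {w : Fin k → ℂ | Submodule.span ℂ (insert w (Set.range v)) = ⊤},
      convexHull ℝ
        (pathComponentIn {w : Fin k → ℂ | Submodule.span ℂ (insert w (Set.range v)) = ⊤} w)
        = Set.univ := by
  have hΩ : {w : Fin k → ℂ | Submodule.span ℂ (insert w (Set.range v)) = ⊤} =
      {w : Fin k → ℂ | (ℂ ∙ w) ⊔ Submodule.span ℂ (Set.range v) = ⊤} := by
    ext w
    rw [Set.mem_setOf_eq, Set.mem_setOf_eq, Submodule.span_insert]
  rw [hΩ]
  exact stmt10_master (Submodule.span ℂ (Set.range v))
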